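/- arXiv:2511.15519 — 2 statements merged into one kernel-verified Lean document; each statement's English description precedes it below -/
import Mathlib

section
/- Let b and d be integers with −2d < b < 2d, and let p, a, c ∈ ℂ with |p| < 1, a ≠ 0, c ≠ 0. Then (∑_{m,n∈ℤ} (−1)^{m+n} p^{4(dm²+bmn+dn²)+(4d+2b)(m+n)+2d+b} a^{2m+1} c^{2n+1})² + (∑_{m,n∈ℤ} p^{4(dm²+bmn+dn²)} a^{2m} c^{2n})² = (∑_{m,n∈ℤ} (−1)^{m+n} p^{4(dm²+bmn+dn²)} a^{2m} c^{2n})² + (∑_{m,n∈ℤ} p^{4(dm²+bmn+dn²)+(4d+2b)(m+n)+2d+b} a^{2m+1} c^{2n+1})². (This is the two-variable generalization with q = p⁴, x = a², y = c², clearing the fractional exponents q^{d(m+1/2)²+b(m+1/2)(n+1/2)+d(n+1/2)²} x^{m+1/2} y^{n+1/2}, using d(m+1/2)²+b(m+1/2)(n+1/2)+d(n+1/2)² = dm²+bmn+dn²+(d+b/2)(m+n)+d/2+b/4.) -/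
open Complex

private lemma sumNatAux {ρ K : ℝ} (hρ0 : 0 < ρ) (hρ1 : ρ < 1) (hK : 0 < K) :
    Summable fun k : ℕ => ρ ^ (2 * (k : ℤ) ^ 2 - 2 * (k : ℤ) - 1) * K ^ (k : ℤ) := by
  obtain ⟨M, hM⟩ := exists_pow_lt_of_lt_one (show (0:ℝ) < 1 / 2 / K by positivity) hρ1
  apply summable_of_isBigO_nat
    (summable_geometric_of_lt_one (by norm_num) (by norm_num : (1/2:ℝ) < 1))
  rw [Asymptotics.isBigO_iff]
  refine ⟨ρ⁻¹, Filter.eventually_atTop.2 ⟨M + 1, fun k hk => ?_⟩⟩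
  have hk' : (M : ℤ) + 1 ≤ (k : ℤ) := by exact_mod_cast hk
  have h1 : (M : ℤ) * k - 1 ≤ 2 * (k:ℤ)^2 - 2*(k:ℤ) - 1 := by nlinarith [sq_nonneg ((k:ℤ) - 1)]
  have hρk : ρ ^ (2 * (k:ℤ)^2 - 2*(k:ℤ) - 1) ≤ ρ⁻¹ * (ρ ^ M) ^ k := by
    calc ρ ^ (2 * (k:ℤ)^2 - 2*(k:ℤ) - 1) ≤ ρ ^ ((M:ℤ) * k - 1) :=
          zpow_le_zpow_right_of_le_one₀ hρ0 hρ1.le h1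
      _ = ρ⁻¹ * (ρ ^ M) ^ k := by
          rw [zpow_sub₀ hρ0.ne', zpow_one]
          rw [show (M:ℤ) * (k:ℤ) = ((M * k : ℕ) : ℤ) by push_cast; ring, zpow_natCast, pow_mul]
          ring
  have hMK : ρ ^ M * K ≤ 1/2 := by
    rw [div_div] at hM
    rw [lt_div_iff₀ (by positivity)] at hM
    linarith
  have hterm : ρ ^ (2 * (k:ℤ)^2 - 2*(k:ℤ) - 1) * K ^ (k:ℤ) ≤ ρ⁻¹ * (1/2)^k := by
    have hKk : K ^ (k:ℤ) = K ^ k := zpow_natCast K k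
    calc ρ ^ (2 * (k:ℤ)^2 - 2*(k:ℤ) - 1) * K ^ (k:ℤ)
        ≤ (ρ⁻¹ * (ρ ^ M) ^ k) * K ^ k := by
          rw [hKk]; exact mul_le_mul_of_nonneg_right hρk (by positivity)
      _ = ρ⁻¹ * (ρ^M * K)^k := by rw [mul_pow]; ring
      _ ≤ ρ⁻¹ * (1/2)^k := by
          have : (ρ^M * K)^k ≤ (1/2)^k :=
            pow_le_pow_left₀ (by positivity) hMK k
          exact mul_le_mul_of_nonneg_left this (by positivity)
  have hnn : (0:ℝ) ≤ ρ ^ (2 * (k:ℤ)^2 - 2*(k:ℤ) - 1) * K ^ (k:ℤ) := by positivity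
  rw [Real.norm_eq_abs, Real.norm_eq_abs, _root_.abs_of_nonneg hnn,
    _root_.abs_of_nonneg (by positivity : (0:ℝ) ≤ (1/2:ℝ)^k)]
  exact hterm

private lemma sumIntAux {ρ R : ℝ} (hρ0 : 0 < ρ) (hρ1 : ρ < 1) (hR : 0 < R) :
    Summable fun m : ℤ => ρ ^ (2 * m ^ 2 - 2 * |m| - 1) * R ^ m := by
  apply Summable.of_nat_of_neg
  · apply (sumNatAux hρ0 hρ1 hR).congr
    intro k
    simp [abs_of_nonneg (show (0:ℤ) ≤ (k:ℤ) by positivity)]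
  · apply (sumNatAux hρ0 hρ1 (by positivity : (0:ℝ) < R⁻¹)).congr
    intro k
    rw [show |(-(k:ℤ))| = (k:ℤ) by simp, zpow_neg, ← inv_zpow]
    ring_nf

private lemma tsumSumType {α β : Type u} {f : α ⊕ β → ℂ} (hf : Summable f) :
    ∑' x, f x = (∑' a : α, f (Sum.inl a)) + ∑' b : β, f (Sum.inr b) := by
  rw [← (Equiv.sumEquivSigmaBool α β).symm.tsum_eq f]
  rw [show (fun c => f ((Equiv.sumEquivSigmaBool α β).symm c))
      = (f ∘ (Equiv.sumEquivSigmaBool α β).symm) from rfl]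
  rw [Summable.tsum_sigma (hf.comp_injective (Equiv.sumEquivSigmaBool α β).symm.injective)]
  rw [tsum_fintype]
  simp [Equiv.sumEquivSigmaBool, add_comm]

set_option maxHeartbeats 1000000 in
private lemma masterSummable {p a c : ℂ} (hp0 : p ≠ 0) (hp : ‖p‖ < 1)
    (ha : a ≠ 0) (hc : c ≠ 0) (E : ℤ → ℤ → ℤ)
    (hE : ∀ m n : ℤ, 2 * (m ^ 2 + n ^ 2) - 2 * |m| - 2 * |n| - 2 ≤ E m n)
    (ε : ℤ → ℤ → ℂ) (hε : ∀ m n, ‖ε m n‖ = 1) (δ : ℤ) :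
    Summable fun mn : ℤ × ℤ =>
      ε mn.1 mn.2 * p ^ (E mn.1 mn.2) * a ^ (2 * mn.1 + δ) * c ^ (2 * mn.2 + δ) := by
  set ρ := ‖p‖ with hρ
  set r := ‖a‖ with hr
  set s := ‖c‖ with hs
  have hρ0 : 0 < ρ := norm_pos_iff.mpr hp0
  have hr0 : 0 < r := norm_pos_iff.mpr ha
  have hs0 : 0 < s := norm_pos_iff.mpr hc
  rw [← summable_norm_iff]
  have base : Summable fun mn : ℤ × ℤ =>
      (ρ ^ (2 * mn.1 ^ 2 - 2 * |mn.1| - 1) * (r ^ 2) ^ mn.1) *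
      (ρ ^ (2 * mn.2 ^ 2 - 2 * |mn.2| - 1) * (s ^ 2) ^ mn.2) :=
    (sumIntAux hρ0 hp (by positivity)).mul_of_nonneg
      (sumIntAux hρ0 hp (by positivity))
      (fun m => by positivity) (fun n => by positivity)
  apply Summable.of_nonneg_of_le (fun _ => norm_nonneg _) ?_ (base.mul_left (r ^ δ * s ^ δ))
  rintro ⟨m, n⟩
  have hnorm : ‖ε m n * p ^ (E m n) * a ^ (2 * m + δ) * c ^ (2 * n + δ)‖
      = ρ ^ (E m n) * (r ^ (2 * m + δ) * s ^ (2 * n + δ)) := by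
    simp only [norm_mul, norm_zpow, hε]
    ring
  rw [hnorm]
  have hle : ρ ^ (E m n) ≤ ρ ^ (2 * (m ^ 2 + n ^ 2) - 2 * |m| - 2 * |n| - 2) :=
    zpow_le_zpow_right_of_le_one₀ hρ0 hp.le (hE m n)
  calc ρ ^ (E m n) * (r ^ (2 * m + δ) * s ^ (2 * n + δ))
      ≤ ρ ^ (2 * (m ^ 2 + n ^ 2) - 2 * |m| - 2 * |n| - 2) * (r ^ (2 * m + δ) * s ^ (2 * n + δ)) :=
        mul_le_mul_of_nonneg_right hle (by positivity)
    _ = r ^ δ * s ^ δ * ((ρ ^ (2 * m ^ 2 - 2 * |m| - 1) * (r ^ 2) ^ m) *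
          (ρ ^ (2 * n ^ 2 - 2 * |n| - 1) * (s ^ 2) ^ n)) := by
        rw [show 2 * (m ^ 2 + n ^ 2) - 2 * |m| - 2 * |n| - 2
            = (2 * m ^ 2 - 2 * |m| - 1) + (2 * n ^ 2 - 2 * |n| - 1) from by ring,
          zpow_add₀ hρ0.ne',
          show (2 : ℤ) * m + δ = 2 * m + δ from rfl,
          zpow_add₀ hr0.ne' (2 * m) δ, zpow_add₀ hs0.ne' (2 * n) δ,
          show ((r : ℝ) ^ 2) ^ m = r ^ (2 * m) from by
            rw [← zpow_natCast r 2, ← zpow_mul]; norm_num,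
          show ((s : ℝ) ^ 2) ^ n = s ^ (2 * n) from by
            rw [← zpow_natCast s 2, ← zpow_mul]; norm_num]
        push_cast
        ring

private lemma prodFactor {F : ℤ × ℤ → ℂ} (hF : Summable F) (f g : ℤ → ℂ)
    (h : ∀ j k : ℤ, F (j, k) = f j * g k) :
    ∑' jk : ℤ × ℤ, F jk = (∑' j, f j) * ∑' k, g k := by
  rw [Summable.tsum_prod hF]
  calc ∑' j, ∑' k, F (j, k) = ∑' j, ∑' k, f j * g k := by
        congr 1; ext j; congr 1; ext k; exact h j k
    _ = ∑' j, f j * ∑' k, g k := by congr 1; ext j; exact tsum_mul_left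
    _ = (∑' j, f j) * ∑' k, g k := tsum_mul_right

private lemma splitLemma (F : ℤ × ℤ → ℂ) (hF : Summable F) (e : (ℤ × ℤ) ⊕ (ℤ × ℤ) ≃ ℤ × ℤ)
    (f g f' g' : ℤ → ℂ)
    (h1 : ∀ j k : ℤ, F (e (Sum.inl (j, k))) = f j * g k)
    (h2 : ∀ j k : ℤ, F (e (Sum.inr (j, k))) = f' j * g' k) :
    (∑' m : ℤ, ∑' n : ℤ, F (m, n))
      = (∑' j, f j) * (∑' k, g k) + (∑' j, f' j) * (∑' k, g' k) := by
  have hFe : Summable (F ∘ e) := hF.comp_injective e.injective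
  rw [← Summable.tsum_prod hF, ← e.tsum_eq F]
  rw [show (fun x => F (e x)) = F ∘ e from rfl] at *
  rw [tsumSumType hFe]
  congr 1
  · exact prodFactor (hFe.comp_injective Sum.inl_injective) f g h1
  · exact prodFactor (hFe.comp_injective Sum.inr_injective) f' g' h2

private def eEven : (ℤ × ℤ) ⊕ (ℤ × ℤ) ≃ ℤ × ℤ where
  toFun x := Sum.elim (fun jk => (jk.1 + jk.2, jk.1 - jk.2))
    (fun jk => (jk.1 + jk.2 + 1, jk.1 - jk.2)) x
  invFun mn := if (mn.1 + mn.2) % 2 = 0 then Sum.inl ((mn.1 + mn.2) / 2, (mn.1 - mn.2) / 2)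
    else Sum.inr ((mn.1 + mn.2 - 1) / 2, (mn.1 - mn.2 - 1) / 2)
  left_inv := by
    rintro (⟨j, k⟩ | ⟨j, k⟩) <;> simp only [Sum.elim_inl, Sum.elim_inr] <;> split_ifs with h <;>
      simp only [h, if_true, if_false] <;>
      first
        | (simp only [Sum.inl.injEq, Sum.inr.injEq, Prod.mk.injEq]; constructor <;> omega)
        | (exfalso; omega)
  right_inv := by
    rintro ⟨m, n⟩
    by_cases h : (m + n) % 2 = 0 <;>
      simp only [h, if_true, if_false, Sum.elim_inl, Sum.elim_inr, Prod.mk.injEq] <;>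
      constructor <;> omega

private def eOdd : (ℤ × ℤ) ⊕ (ℤ × ℤ) ≃ ℤ × ℤ where
  toFun x := Sum.elim (fun jk => (jk.1 + jk.2, jk.1 - jk.2 - 1))
    (fun jk => (jk.1 + jk.2, jk.1 - jk.2)) x
  invFun mn := if (mn.1 + mn.2) % 2 = 0 then Sum.inr ((mn.1 + mn.2) / 2, (mn.1 - mn.2) / 2)
    else Sum.inl ((mn.1 + mn.2 + 1) / 2, (mn.1 - mn.2 - 1) / 2)
  left_inv := by
    rintro (⟨j, k⟩ | ⟨j, k⟩) <;> simp only [Sum.elim_inl, Sum.elim_inr] <;> split_ifs with h <;>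
      simp only [h, if_true, if_false] <;>
      first
        | (simp only [Sum.inl.injEq, Sum.inr.injEq, Prod.mk.injEq]; constructor <;> omega)
        | (exfalso; omega)
  right_inv := by
    rintro ⟨m, n⟩
    by_cases h : (m + n) % 2 = 0 <;>
      simp only [h, if_true, if_false, Sum.elim_inl, Sum.elim_inr, Prod.mk.injEq] <;>
      constructor <;> omega

/-- Two-variable generalization of the Chan–Chan–Solé identity for the form
`d m² + b mn + d n²` (with `q = p⁴`, `x = a²`, `y = c²` clearing fractional exponents). -/
theorem gen_jacobi_two_variable (d b : ℤ) (hb1 : -(2 * d) < b) (hb2 : b < 2 * d)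
    (p a c : ℂ) (hp : ‖p‖ < 1) (ha : a ≠ 0) (hc : c ≠ 0) :
    (∑' m : ℤ, ∑' n : ℤ, (-1 : ℂ) ^ (m + n) *
        p ^ (4 * (d * m ^ 2 + b * m * n + d * n ^ 2) + (4 * d + 2 * b) * (m + n) + 2 * d + b) *
        a ^ (2 * m + 1) * c ^ (2 * n + 1)) ^ 2
      + (∑' m : ℤ, ∑' n : ℤ,
          p ^ (4 * (d * m ^ 2 + b * m * n + d * n ^ 2)) * a ^ (2 * m) * c ^ (2 * n)) ^ 2
      = (∑' m : ℤ, ∑' n : ℤ, (-1 : ℂ) ^ (m + n) *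
          p ^ (4 * (d * m ^ 2 + b * m * n + d * n ^ 2)) * a ^ (2 * m) * c ^ (2 * n)) ^ 2
        + (∑' m : ℤ, ∑' n : ℤ,
            p ^ (4 * (d * m ^ 2 + b * m * n + d * n ^ 2) + (4 * d + 2 * b) * (m + n) + 2 * d + b) *
            a ^ (2 * m + 1) * c ^ (2 * n + 1)) ^ 2 := by
  by_cases hp0 : p = 0
  · subst hp0
    have key : ∀ m n : ℤ, (m ≠ 0 ∨ n ≠ 0) → 4 * (d * m ^ 2 + b * m * n + d * n ^ 2) ≠ 0 := by
      intro m n hmn h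
      have h1 : (2*d+b) * (m+n)^2 + (2*d-b) * (m-n)^2 = 0 := by linear_combination h
      have h2 : (m+n)^2 = 0 := by
        nlinarith [sq_nonneg (m+n), sq_nonneg (m-n)]
      have h3 : (m-n)^2 = 0 := by
        nlinarith [sq_nonneg (m+n), sq_nonneg (m-n)]
      have h4 : m + n = 0 := by exact pow_eq_zero_iff two_ne_zero |>.1 h2
      have h5 : m - n = 0 := by exact pow_eq_zero_iff two_ne_zero |>.1 h3
      omega
    have keyS : ∀ m n : ℤ,
        4 * (d * m ^ 2 + b * m * n + d * n ^ 2) + (4 * d + 2 * b) * (m + n) + 2 * d + b ≠ 0 := by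
      intro m n h
      have h1 : (2*d+b) * (m+n+1)^2 + (2*d-b) * (m-n)^2 = 0 := by linear_combination h
      have h2 : (m+n+1)^2 = 0 := by
        nlinarith [sq_nonneg (m+n+1), sq_nonneg (m-n)]
      have h3 : (m-n)^2 = 0 := by
        nlinarith [sq_nonneg (m+n+1), sq_nonneg (m-n)]
      have h4 : m + n + 1 = 0 := by exact pow_eq_zero_iff two_ne_zero |>.1 h2
      have h5 : m - n = 0 := by exact pow_eq_zero_iff two_ne_zero |>.1 h3
      omega
    have zA : (∑' m : ℤ, ∑' n : ℤ, (-1 : ℂ) ^ (m + n) *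
        (0:ℂ) ^ (4 * (d * m ^ 2 + b * m * n + d * n ^ 2) + (4 * d + 2 * b) * (m + n) + 2 * d + b) *
        a ^ (2 * m + 1) * c ^ (2 * n + 1)) = 0 := by
      have : ∀ m n : ℤ, (-1 : ℂ) ^ (m + n) *
          (0:ℂ) ^ (4 * (d * m ^ 2 + b * m * n + d * n ^ 2) + (4 * d + 2 * b) * (m + n) + 2 * d + b) *
          a ^ (2 * m + 1) * c ^ (2 * n + 1) = 0 := by
        intro m n; rw [zero_zpow _ (keyS m n)]; ring
      calc (∑' m : ℤ, ∑' n : ℤ, (-1 : ℂ) ^ (m + n) *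
          (0:ℂ) ^ (4 * (d * m ^ 2 + b * m * n + d * n ^ 2) + (4 * d + 2 * b) * (m + n) + 2 * d + b) *
          a ^ (2 * m + 1) * c ^ (2 * n + 1))
          = ∑' (_ : ℤ), ∑' (_ : ℤ), (0:ℂ) := by
            exact tsum_congr fun m => tsum_congr fun n => this m n
        _ = 0 := by simp
    have zD : (∑' m : ℤ, ∑' n : ℤ,
        (0:ℂ) ^ (4 * (d * m ^ 2 + b * m * n + d * n ^ 2) + (4 * d + 2 * b) * (m + n) + 2 * d + b) *
        a ^ (2 * m + 1) * c ^ (2 * n + 1)) = 0 := by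
      have : ∀ m n : ℤ,
          (0:ℂ) ^ (4 * (d * m ^ 2 + b * m * n + d * n ^ 2) + (4 * d + 2 * b) * (m + n) + 2 * d + b) *
          a ^ (2 * m + 1) * c ^ (2 * n + 1) = 0 := by
        intro m n; rw [zero_zpow _ (keyS m n)]; ring
      calc (∑' m : ℤ, ∑' n : ℤ,
          (0:ℂ) ^ (4 * (d * m ^ 2 + b * m * n + d * n ^ 2) + (4 * d + 2 * b) * (m + n) + 2 * d + b) *
          a ^ (2 * m + 1) * c ^ (2 * n + 1))
          = ∑' (_ : ℤ), ∑' (_ : ℤ), (0:ℂ) := by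
            exact tsum_congr fun m => tsum_congr fun n => this m n
        _ = 0 := by simp
    have oB : (∑' m : ℤ, ∑' n : ℤ,
        (0:ℂ) ^ (4 * (d * m ^ 2 + b * m * n + d * n ^ 2)) * a ^ (2 * m) * c ^ (2 * n)) = 1 := by
      have inner : ∀ m : ℤ, (∑' n : ℤ,
          (0:ℂ) ^ (4 * (d * m ^ 2 + b * m * n + d * n ^ 2)) * a ^ (2 * m) * c ^ (2 * n))
          = if m = 0 then 1 else 0 := by
        intro m
        rw [tsum_eq_single 0 (fun n hn => by
          rw [zero_zpow _ (key m n (Or.inr hn))]; ring)]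
        by_cases hm : m = 0
        · subst hm; norm_num
        · rw [if_neg hm, zero_zpow _ (key m 0 (Or.inl hm))]; ring
      rw [tsum_congr inner, tsum_eq_single 0 (fun m hm => if_neg hm), if_pos rfl]
    have oC : (∑' m : ℤ, ∑' n : ℤ, (-1 : ℂ) ^ (m + n) *
        (0:ℂ) ^ (4 * (d * m ^ 2 + b * m * n + d * n ^ 2)) * a ^ (2 * m) * c ^ (2 * n)) = 1 := by
      have inner : ∀ m : ℤ, (∑' n : ℤ, (-1 : ℂ) ^ (m + n) *
          (0:ℂ) ^ (4 * (d * m ^ 2 + b * m * n + d * n ^ 2)) * a ^ (2 * m) * c ^ (2 * n))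
          = if m = 0 then 1 else 0 := by
        intro m
        rw [tsum_eq_single 0 (fun n hn => by
          rw [zero_zpow _ (key m n (Or.inr hn))]; ring)]
        by_cases hm : m = 0
        · subst hm; norm_num
        · rw [if_neg hm, zero_zpow _ (key m 0 (Or.inl hm))]; ring
      rw [tsum_congr inner, tsum_eq_single 0 (fun m hm => if_neg hm), if_pos rfl]
    rw [zA, zD, oB, oC]
    norm_num
  · -- main case
    have hEplain : ∀ m n : ℤ,
        2 * (m ^ 2 + n ^ 2) - 2 * |m| - 2 * |n| - 2 ≤ 4 * (d * m ^ 2 + b * m * n + d * n ^ 2) := by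
      intro m n
      nlinarith [mul_nonneg (show (0:ℤ) ≤ 2*d+b-1 by omega) (sq_nonneg (m+n)),
        mul_nonneg (show (0:ℤ) ≤ 2*d-b-1 by omega) (sq_nonneg (m-n)), abs_nonneg m, abs_nonneg n]
    have hEshift : ∀ m n : ℤ,
        2 * (m ^ 2 + n ^ 2) - 2 * |m| - 2 * |n| - 2
          ≤ 4 * (d * m ^ 2 + b * m * n + d * n ^ 2) + (4 * d + 2 * b) * (m + n) + 2 * d + b := by
      intro m n
      nlinarith [mul_nonneg (show (0:ℤ) ≤ 2*d+b-1 by omega) (sq_nonneg (m+n+1)),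
        mul_nonneg (show (0:ℤ) ≤ 2*d-b-1 by omega) (sq_nonneg (m-n)), neg_abs_le m, neg_abs_le n]
    have hsgn : ∀ m n : ℤ, ‖(-1:ℂ) ^ (m + n)‖ = 1 := by
      intro m n; rw [norm_zpow]; simp
    have hsumB : Summable (fun mn : ℤ × ℤ =>
        p ^ (4 * (d * mn.1 ^ 2 + b * mn.1 * mn.2 + d * mn.2 ^ 2)) * a ^ (2 * mn.1) * c ^ (2 * mn.2)) := by
      apply (masterSummable hp0 hp ha hc _ hEplain (fun _ _ => (1:ℂ)) (fun _ _ => by simp) 0).congr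
      intro mn; simp
    have hsumC : Summable (fun mn : ℤ × ℤ => (-1:ℂ) ^ (mn.1 + mn.2) *
        p ^ (4 * (d * mn.1 ^ 2 + b * mn.1 * mn.2 + d * mn.2 ^ 2)) * a ^ (2 * mn.1) * c ^ (2 * mn.2)) := by
      apply (masterSummable hp0 hp ha hc _ hEplain (fun m n => (-1:ℂ) ^ (m + n)) hsgn 0).congr
      intro mn; simp
    have hsumD : Summable (fun mn : ℤ × ℤ =>
        p ^ (4 * (d * mn.1 ^ 2 + b * mn.1 * mn.2 + d * mn.2 ^ 2)
          + (4 * d + 2 * b) * (mn.1 + mn.2) + 2 * d + b) * a ^ (2 * mn.1 + 1) * c ^ (2 * mn.2 + 1)) := by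
      apply (masterSummable hp0 hp ha hc _ hEshift (fun _ _ => (1:ℂ)) (fun _ _ => by simp) 1).congr
      intro mn; simp
    have hsumA : Summable (fun mn : ℤ × ℤ => (-1:ℂ) ^ (mn.1 + mn.2) *
        p ^ (4 * (d * mn.1 ^ 2 + b * mn.1 * mn.2 + d * mn.2 ^ 2)
          + (4 * d + 2 * b) * (mn.1 + mn.2) + 2 * d + b) * a ^ (2 * mn.1 + 1) * c ^ (2 * mn.2 + 1)) := by
      apply (masterSummable hp0 hp ha hc _ hEshift (fun m n => (-1:ℂ) ^ (m + n)) hsgn 1).congr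
      intro mn; simp
    have hB : (∑' m : ℤ, ∑' n : ℤ,
          p ^ (4 * (d * m ^ 2 + b * m * n + d * n ^ 2)) * a ^ (2 * m) * c ^ (2 * n))
        = (∑' j : ℤ, p ^ (4 * (2 * d + b) * j ^ 2) * a ^ (2 * j) * c ^ (2 * j)) *
            (∑' k : ℤ, p ^ (4 * (2 * d - b) * k ^ 2) * a ^ (2 * k) * c ^ (-(2 * k)))
          + (∑' j : ℤ, p ^ ((2 * d + b) * (2 * j + 1) ^ 2) * a ^ (2 * j + 1) * c ^ (2 * j + 1)) *
            (∑' k : ℤ, p ^ ((2 * d - b) * (2 * k + 1) ^ 2) * a ^ (2 * k + 1) * c ^ (-(2 * k + 1))) := by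
      refine splitLemma _ hsumB eEven _ _ _ _ ?_ ?_
      · intro j k
        show p ^ (4 * (d * (j + k) ^ 2 + b * (j + k) * (j - k) + d * (j - k) ^ 2)) *
            a ^ (2 * (j + k)) * c ^ (2 * (j - k)) = _
        rw [show 4 * (d * (j + k) ^ 2 + b * (j + k) * (j - k) + d * (j - k) ^ 2)
              = 4 * (2 * d + b) * j ^ 2 + 4 * (2 * d - b) * k ^ 2 by ring,
          show 2 * (j + k) = 2 * j + 2 * k by ring,
          show 2 * (j - k) = 2 * j + -(2 * k) by ring,
          zpow_add₀ hp0, zpow_add₀ ha, zpow_add₀ hc]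
        ring
      · intro j k
        show p ^ (4 * (d * (j + k + 1) ^ 2 + b * (j + k + 1) * (j - k) + d * (j - k) ^ 2)) *
            a ^ (2 * (j + k + 1)) * c ^ (2 * (j - k)) = _
        rw [show 4 * (d * (j + k + 1) ^ 2 + b * (j + k + 1) * (j - k) + d * (j - k) ^ 2)
              = (2 * d + b) * (2 * j + 1) ^ 2 + (2 * d - b) * (2 * k + 1) ^ 2 by ring,
          show 2 * (j + k + 1) = (2 * j + 1) + (2 * k + 1) by ring,
          show 2 * (j - k) = (2 * j + 1) + -(2 * k + 1) by ring,
          zpow_add₀ hp0, zpow_add₀ ha, zpow_add₀ hc]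
        ring
    have hC : (∑' m : ℤ, ∑' n : ℤ, (-1 : ℂ) ^ (m + n) *
          p ^ (4 * (d * m ^ 2 + b * m * n + d * n ^ 2)) * a ^ (2 * m) * c ^ (2 * n))
        = (∑' j : ℤ, p ^ (4 * (2 * d + b) * j ^ 2) * a ^ (2 * j) * c ^ (2 * j)) *
            (∑' k : ℤ, p ^ (4 * (2 * d - b) * k ^ 2) * a ^ (2 * k) * c ^ (-(2 * k)))
          + (∑' j : ℤ, -(p ^ ((2 * d + b) * (2 * j + 1) ^ 2) * a ^ (2 * j + 1) * c ^ (2 * j + 1))) *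
            (∑' k : ℤ, p ^ ((2 * d - b) * (2 * k + 1) ^ 2) * a ^ (2 * k + 1) * c ^ (-(2 * k + 1))) := by
      refine splitLemma _ hsumC eEven _ _ _ _ ?_ ?_
      · intro j k
        show (-1 : ℂ) ^ ((j + k) + (j - k)) *
            p ^ (4 * (d * (j + k) ^ 2 + b * (j + k) * (j - k) + d * (j - k) ^ 2)) *
            a ^ (2 * (j + k)) * c ^ (2 * (j - k)) = _
        rw [Even.neg_one_zpow ⟨j, by ring⟩,
          show 4 * (d * (j + k) ^ 2 + b * (j + k) * (j - k) + d * (j - k) ^ 2)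
              = 4 * (2 * d + b) * j ^ 2 + 4 * (2 * d - b) * k ^ 2 by ring,
          show 2 * (j + k) = 2 * j + 2 * k by ring,
          show 2 * (j - k) = 2 * j + -(2 * k) by ring,
          zpow_add₀ hp0, zpow_add₀ ha, zpow_add₀ hc]
        ring
      · intro j k
        show (-1 : ℂ) ^ ((j + k + 1) + (j - k)) *
            p ^ (4 * (d * (j + k + 1) ^ 2 + b * (j + k + 1) * (j - k) + d * (j - k) ^ 2)) *
            a ^ (2 * (j + k + 1)) * c ^ (2 * (j - k)) = _
        rw [Odd.neg_one_zpow ⟨j, by ring⟩,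
          show 4 * (d * (j + k + 1) ^ 2 + b * (j + k + 1) * (j - k) + d * (j - k) ^ 2)
              = (2 * d + b) * (2 * j + 1) ^ 2 + (2 * d - b) * (2 * k + 1) ^ 2 by ring,
          show 2 * (j + k + 1) = (2 * j + 1) + (2 * k + 1) by ring,
          show 2 * (j - k) = (2 * j + 1) + -(2 * k + 1) by ring,
          zpow_add₀ hp0, zpow_add₀ ha, zpow_add₀ hc]
        ring
    have hD : (∑' m : ℤ, ∑' n : ℤ,
          p ^ (4 * (d * m ^ 2 + b * m * n + d * n ^ 2) + (4 * d + 2 * b) * (m + n) + 2 * d + b) *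
          a ^ (2 * m + 1) * c ^ (2 * n + 1))
        = (∑' j : ℤ, p ^ (4 * (2 * d + b) * j ^ 2) * a ^ (2 * j) * c ^ (2 * j)) *
            (∑' k : ℤ, p ^ ((2 * d - b) * (2 * k + 1) ^ 2) * a ^ (2 * k + 1) * c ^ (-(2 * k + 1)))
          + (∑' j : ℤ, p ^ ((2 * d + b) * (2 * j + 1) ^ 2) * a ^ (2 * j + 1) * c ^ (2 * j + 1)) *
            (∑' k : ℤ, p ^ (4 * (2 * d - b) * k ^ 2) * a ^ (2 * k) * c ^ (-(2 * k))) := by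
      refine splitLemma _ hsumD eOdd _ _ _ _ ?_ ?_
      · intro j k
        show p ^ (4 * (d * (j + k) ^ 2 + b * (j + k) * (j - k - 1) + d * (j - k - 1) ^ 2)
              + (4 * d + 2 * b) * ((j + k) + (j - k - 1)) + 2 * d + b) *
            a ^ (2 * (j + k) + 1) * c ^ (2 * (j - k - 1) + 1) = _
        rw [show 4 * (d * (j + k) ^ 2 + b * (j + k) * (j - k - 1) + d * (j - k - 1) ^ 2)
              + (4 * d + 2 * b) * ((j + k) + (j - k - 1)) + 2 * d + b
              = 4 * (2 * d + b) * j ^ 2 + (2 * d - b) * (2 * k + 1) ^ 2 by ring,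
          show 2 * (j + k) + 1 = 2 * j + (2 * k + 1) by ring,
          show 2 * (j - k - 1) + 1 = 2 * j + -(2 * k + 1) by ring,
          zpow_add₀ hp0, zpow_add₀ ha, zpow_add₀ hc]
        ring
      · intro j k
        show p ^ (4 * (d * (j + k) ^ 2 + b * (j + k) * (j - k) + d * (j - k) ^ 2)
              + (4 * d + 2 * b) * ((j + k) + (j - k)) + 2 * d + b) *
            a ^ (2 * (j + k) + 1) * c ^ (2 * (j - k) + 1) = _
        rw [show 4 * (d * (j + k) ^ 2 + b * (j + k) * (j - k) + d * (j - k) ^ 2)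
              + (4 * d + 2 * b) * ((j + k) + (j - k)) + 2 * d + b
              = (2 * d + b) * (2 * j + 1) ^ 2 + 4 * (2 * d - b) * k ^ 2 by ring,
          show 2 * (j + k) + 1 = (2 * j + 1) + 2 * k by ring,
          show 2 * (j - k) + 1 = (2 * j + 1) + -(2 * k) by ring,
          zpow_add₀ hp0, zpow_add₀ ha, zpow_add₀ hc]
        ring
    have hA : (∑' m : ℤ, ∑' n : ℤ, (-1 : ℂ) ^ (m + n) *
          p ^ (4 * (d * m ^ 2 + b * m * n + d * n ^ 2) + (4 * d + 2 * b) * (m + n) + 2 * d + b) *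
          a ^ (2 * m + 1) * c ^ (2 * n + 1))
        = (∑' j : ℤ, -(p ^ (4 * (2 * d + b) * j ^ 2) * a ^ (2 * j) * c ^ (2 * j))) *
            (∑' k : ℤ, p ^ ((2 * d - b) * (2 * k + 1) ^ 2) * a ^ (2 * k + 1) * c ^ (-(2 * k + 1)))
          + (∑' j : ℤ, p ^ ((2 * d + b) * (2 * j + 1) ^ 2) * a ^ (2 * j + 1) * c ^ (2 * j + 1)) *
            (∑' k : ℤ, p ^ (4 * (2 * d - b) * k ^ 2) * a ^ (2 * k) * c ^ (-(2 * k))) := by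
      refine splitLemma _ hsumA eOdd _ _ _ _ ?_ ?_
      · intro j k
        show (-1 : ℂ) ^ ((j + k) + (j - k - 1)) *
            p ^ (4 * (d * (j + k) ^ 2 + b * (j + k) * (j - k - 1) + d * (j - k - 1) ^ 2)
              + (4 * d + 2 * b) * ((j + k) + (j - k - 1)) + 2 * d + b) *
            a ^ (2 * (j + k) + 1) * c ^ (2 * (j - k - 1) + 1) = _
        rw [Odd.neg_one_zpow ⟨j - 1, by ring⟩,
          show 4 * (d * (j + k) ^ 2 + b * (j + k) * (j - k - 1) + d * (j - k - 1) ^ 2)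
              + (4 * d + 2 * b) * ((j + k) + (j - k - 1)) + 2 * d + b
              = 4 * (2 * d + b) * j ^ 2 + (2 * d - b) * (2 * k + 1) ^ 2 by ring,
          show 2 * (j + k) + 1 = 2 * j + (2 * k + 1) by ring,
          show 2 * (j - k - 1) + 1 = 2 * j + -(2 * k + 1) by ring,
          zpow_add₀ hp0, zpow_add₀ ha, zpow_add₀ hc]
        ring
      · intro j k
        show (-1 : ℂ) ^ ((j + k) + (j - k)) *
            p ^ (4 * (d * (j + k) ^ 2 + b * (j + k) * (j - k) + d * (j - k) ^ 2)
              + (4 * d + 2 * b) * ((j + k) + (j - k)) + 2 * d + b) *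
            a ^ (2 * (j + k) + 1) * c ^ (2 * (j - k) + 1) = _
        rw [Even.neg_one_zpow ⟨j, by ring⟩,
          show 4 * (d * (j + k) ^ 2 + b * (j + k) * (j - k) + d * (j - k) ^ 2)
              + (4 * d + 2 * b) * ((j + k) + (j - k)) + 2 * d + b
              = (2 * d + b) * (2 * j + 1) ^ 2 + 4 * (2 * d - b) * k ^ 2 by ring,
          show 2 * (j + k) + 1 = (2 * j + 1) + 2 * k by ring,
          show 2 * (j - k) + 1 = (2 * j + 1) + -(2 * k) by ring,
          zpow_add₀ hp0, zpow_add₀ ha, zpow_add₀ hc]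
        ring
    rw [hA, hB, hC, hD, tsum_neg, tsum_neg]
    ring
end

section
/- Let α and β be integers with 0 < α < 4β, and let p, a, y ∈ ℂ with |p| < 1, a ≠ 0, y ≠ 0. Then (∑_{m,n∈ℤ} (−1)^n p^{4(αm²+αmn+βn²)+4αm+2αn+α} a^{2m+1} y^n)² + (∑_{m,n∈ℤ} p^{4(αm²+αmn+βn²)} a^{2m} y^n)² = (∑_{m,n∈ℤ} (−1)^n p^{4(αm²+αmn+βn²)} a^{2m} y^n)² + (∑_{m,n∈ℤ} p^{4(αm²+αmn+βn²)+4αm+2αn+α} a^{2m+1} y^n)². (This is the two-variable generalization with q = p⁴, x = a², clearing the fractional exponents q^{α(m+1/2)²+α(m+1/2)n+βn²} x^{m+1/2}, using α(m+1/2)²+α(m+1/2)n+βn² = αm²+αmn+βn²+αm+αn/2+α/4.) -/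
open Complex Filter


lemma summable_theta_nat (σ t : ℝ) (hσ0 : 0 ≤ σ) (hσ1 : σ < 1) (ht0 : 0 ≤ t) :
    Summable (fun n : ℕ => σ ^ (n ^ 2) * t ^ n) := by
  apply summable_of_ratio_norm_eventually_le (r := 1/2) (by norm_num)
  have h1 : Tendsto (fun n : ℕ => σ ^ n * t) atTop (nhds 0) := by
    simpa using (tendsto_pow_atTop_nhds_zero_of_lt_one hσ0 hσ1).mul_const t
  filter_upwards [h1.eventually_le_const (by norm_num : (0:ℝ) < 1/2),
    eventually_ge_atTop 0] with n hn _
  have hterm : σ ^ ((n+1) ^ 2) * t ^ (n+1) = (σ ^ (n^2) * t ^ n) * (σ ^ (2*n+1) * t) := by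
    rw [show (n+1)^2 = n^2 + (2*n+1) by ring, pow_add, pow_succ]; ring
  have h2 : σ ^ (2*n+1) * t ≤ 1/2 := by
    calc σ ^ (2*n+1) * t ≤ σ ^ n * t :=
          mul_le_mul_of_nonneg_right (pow_le_pow_of_le_one hσ0 hσ1.le (by omega)) ht0
      _ ≤ 1/2 := hn
  have h3 : 0 ≤ σ ^ (n^2) * t ^ n := by positivity
  rw [Real.norm_eq_abs, Real.norm_eq_abs, _root_.abs_of_nonneg h3,
    _root_.abs_of_nonneg (by positivity), hterm]
  calc (σ ^ (n^2) * t ^ n) * (σ ^ (2*n+1) * t) ≤ (σ ^ (n^2) * t ^ n) * (1/2) :=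
        mul_le_mul_of_nonneg_left h2 h3
    _ = 1/2 * (σ ^ (n^2) * t ^ n) := by ring

lemma summable_theta_int (σ t : ℝ) (hσ0 : 0 ≤ σ) (hσ1 : σ < 1) (ht0 : 0 < t) :
    Summable (fun n : ℤ => σ ^ (n.natAbs ^ 2) * t ^ n) := by
  apply Summable.of_nat_of_neg
  · simpa using summable_theta_nat σ t hσ0 hσ1 ht0.le
  · have := summable_theta_nat σ t⁻¹ hσ0 hσ1 (by positivity)
    simpa [zpow_neg, ← inv_pow] using this

lemma summable_norm_term (p a s : ℂ) (hp : ‖p‖ < 1) (ha : a ≠ 0) (hs : s ≠ 0)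
    (x0 : ℤ) (E : ℤ × ℤ → ℤ) (hE0 : ∀ v, 0 ≤ E v)
    (hE : ∀ v : ℤ × ℤ, v.1 ^ 2 + v.2 ^ 2 ≤ 4 * E v) :
    Summable (fun v : ℤ × ℤ => ‖p ^ E v * a ^ (2 * v.1 + x0) * s ^ v.2‖) := by
  set r : ℝ := ‖p‖ with hr
  have hr0 : 0 ≤ r := norm_nonneg p
  set σ : ℝ := r ^ ((4:ℝ)⁻¹) with hσ
  have hσ0 : 0 ≤ σ := Real.rpow_nonneg hr0 _
  have hσ1 : σ < 1 := Real.rpow_lt_one hr0 hp (by norm_num)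
  have hσ4 : σ ^ (4:ℕ) = r := by
    rw [hσ, ← Real.rpow_natCast (r ^ ((4:ℝ)⁻¹)) 4, ← Real.rpow_mul hr0]
    norm_num
  set A : ℝ := ‖a‖ with hA
  have hA0 : 0 < A := norm_pos_iff.mpr ha
  set t : ℝ := ‖s‖ with ht
  have ht0 : 0 < t := norm_pos_iff.mpr hs
  set F : ℤ → ℝ := fun m => σ ^ (m.natAbs ^ 2) * A ^ (2 * m + x0) with hF
  set G : ℤ → ℝ := fun n => σ ^ (n.natAbs ^ 2) * t ^ n with hG
  have hFs : Summable F := by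
    have h1 : Summable (fun m : ℤ => σ ^ (m.natAbs ^ 2) * (A ^ (2:ℕ)) ^ m) :=
      summable_theta_int σ (A ^ 2) hσ0 hσ1 (by positivity)
    have h2 := h1.mul_right (A ^ x0)
    apply h2.congr
    intro m
    have h3 : (A ^ (2:ℕ)) ^ m = A ^ (2 * m) := by
      rw [sq, mul_zpow, ← zpow_add₀ (ne_of_gt hA0), two_mul]
    simp only [hF]
    rw [zpow_add₀ (ne_of_gt hA0), ← h3, mul_assoc]
  have hGs : Summable G := summable_theta_int σ t hσ0 hσ1 ht0
  have hFG : Summable (fun v : ℤ × ℤ => F v.1 * G v.2) :=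
    hFs.mul_of_nonneg hGs (fun m => by positivity) (fun n => by positivity)
  apply Summable.of_nonneg_of_le (fun v => norm_nonneg _) _ hFG
  intro v
  obtain ⟨m, n⟩ := v
  have hnorm : ‖p ^ E (m, n) * a ^ (2 * m + x0) * s ^ n‖
      = r ^ E (m, n) * A ^ (2 * m + x0) * t ^ n := by
    rw [norm_mul, norm_mul, norm_zpow, norm_zpow, norm_zpow]
  rw [hnorm]
  have hEr : r ^ E (m, n) = σ ^ (4 * (E (m, n)).toNat) := by
    conv_lhs => rw [← Int.toNat_of_nonneg (hE0 (m, n))]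
    rw [zpow_natCast, ← hσ4, ← pow_mul]
  have hle : m.natAbs ^ 2 + n.natAbs ^ 2 ≤ 4 * (E (m, n)).toNat := by
    have h1 : ((m.natAbs ^ 2 + n.natAbs ^ 2 : ℕ) : ℤ) ≤ ((4 * (E (m, n)).toNat : ℕ) : ℤ) := by
      push_cast
      rw [Int.toNat_of_nonneg (hE0 (m, n))]
      calc |m| ^ 2 + |n| ^ 2 = m ^ 2 + n ^ 2 := by
            rw [_root_.sq_abs, _root_.sq_abs]
        _ ≤ 4 * E (m, n) := hE (m, n)
    exact_mod_cast h1
  have hpow : σ ^ (4 * (E (m, n)).toNat) ≤ σ ^ (m.natAbs ^ 2 + n.natAbs ^ 2) :=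
    pow_le_pow_of_le_one hσ0 hσ1.le hle
  calc r ^ E (m, n) * A ^ (2 * m + x0) * t ^ n
      = σ ^ (4 * (E (m, n)).toNat) * (A ^ (2 * m + x0) * t ^ n) := by rw [hEr]; ring
    _ ≤ σ ^ (m.natAbs ^ 2 + n.natAbs ^ 2) * (A ^ (2 * m + x0) * t ^ n) := by
        apply mul_le_mul_of_nonneg_right hpow
        positivity
    _ = F m * G n := by simp only [hF, hG]; rw [pow_add]; ring


section JacAux

lemma jac_quad_nonneg (α β x n : ℤ) (hα : 0 < α) (hαβ : α < 4 * β) :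
    0 ≤ α * x ^ 2 + 2 * α * x * n + 4 * β * n ^ 2 := by
  nlinarith [mul_nonneg hα.le (sq_nonneg (x + n)),
    mul_nonneg (by omega : (0:ℤ) ≤ 4 * β - α) (sq_nonneg n)]

lemma jac_quad_bound (α β x n m : ℤ) (hα : 0 < α) (hαβ : α < 4 * β) (hx : m ^ 2 ≤ x ^ 2) :
    m ^ 2 + n ^ 2 ≤ 4 * (α * x ^ 2 + 2 * α * x * n + 4 * β * n ^ 2) := by
  nlinarith [mul_nonneg (by omega : (0:ℤ) ≤ α - 1) (sq_nonneg (x + n)),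
    mul_nonneg (by omega : (0:ℤ) ≤ 4 * β - α - 1) (sq_nonneg n),
    sq_nonneg (3 * x + 4 * n), sq_nonneg n, sq_nonneg (x + n)]

lemma jac_zpow_mul_zpow (p : ℂ) {e1 e2 f1 f2 : ℤ} (h1 : 0 ≤ e1) (h2 : 0 ≤ e2)
    (h3 : 0 ≤ f1) (h4 : 0 ≤ f2) (h : e1 + e2 = f1 + f2) :
    p ^ e1 * p ^ e2 = p ^ f1 * p ^ f2 := by
  lift e1 to ℕ using h1
  lift e2 to ℕ using h2
  lift f1 to ℕ using h3
  lift f2 to ℕ using h4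
  rw [zpow_natCast, zpow_natCast, zpow_natCast, zpow_natCast, ← pow_add, ← pow_add]
  congr 1
  exact_mod_cast h

/-- The parity-preserving change of variables on `ℤ⁴`. -/
def jacEquiv : (ℤ × ℤ) × (ℤ × ℤ) ≃ (ℤ × ℤ) × (ℤ × ℤ) where
  toFun w :=
    if (w.1.2 + w.2.2) % 2 = 0 then w else
      ((w.1.1 + (w.1.2 - w.2.2 - 1) / 2, w.2.2), (w.2.1 - (w.1.2 - w.2.2 + 1) / 2, w.1.2))
  invFun w :=
    if (w.1.2 + w.2.2) % 2 = 0 then w else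
      ((w.1.1 + (w.1.2 - w.2.2 + 1) / 2, w.2.2), (w.2.1 - (w.1.2 - w.2.2 - 1) / 2, w.1.2))
  left_inv w := by
    obtain ⟨⟨m1, n1⟩, ⟨m2, n2⟩⟩ := w
    by_cases h : (n1 + n2) % 2 = 0
    · simp [h]
    · simp only [if_neg h]
      split_ifs with h2
      · exact (h (by simp at h2 ⊢; omega)).elim
      · refine Prod.ext (Prod.ext ?_ ?_) (Prod.ext ?_ ?_) <;> simp <;> omega
  right_inv w := by
    obtain ⟨⟨m1, n1⟩, ⟨m2, n2⟩⟩ := w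
    by_cases h : (n1 + n2) % 2 = 0
    · simp [h]
    · simp only [if_neg h]
      split_ifs with h2
      · exact (h (by simp at h2 ⊢; omega)).elim
      · refine Prod.ext (Prod.ext ?_ ?_) (Prod.ext ?_ ?_) <;> simp <;> omega

end JacAux


noncomputable section JacDefs

def Jq (α β m n : ℤ) : ℤ := 4 * (α * m ^ 2 + α * m * n + β * n ^ 2)

def Jr (α β m n : ℤ) : ℤ :=
  4 * (α * m ^ 2 + α * m * n + β * n ^ 2) + 4 * α * m + 2 * α * n + α

def Jf0 (α β : ℤ) (p a s : ℂ) (v : ℤ × ℤ) : ℂ :=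
  p ^ Jq α β v.1 v.2 * a ^ (2 * v.1) * s ^ v.2

def Jf1 (α β : ℤ) (p a s : ℂ) (v : ℤ × ℤ) : ℂ :=
  p ^ Jr α β v.1 v.2 * a ^ (2 * v.1 + 1) * s ^ v.2

end JacDefs

section JacLemmas

variable {α β : ℤ} (hα : 0 < α) (hαβ : α < 4 * β)

lemma Jq_eq (m n : ℤ) : Jq α β m n = α * (2*m) ^ 2 + 2 * α * (2*m) * n + 4 * β * n ^ 2 := by
  unfold Jq; ring

lemma Jr_eq (m n : ℤ) : Jr α β m n = α * (2*m+1) ^ 2 + 2 * α * (2*m+1) * n + 4 * β * n ^ 2 := by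
  unfold Jr; ring

include hα hαβ

lemma Jq_nonneg (m n : ℤ) : 0 ≤ Jq α β m n := by
  rw [Jq_eq]; exact jac_quad_nonneg α β _ _ hα hαβ

lemma Jr_nonneg (m n : ℤ) : 0 ≤ Jr α β m n := by
  rw [Jr_eq]; exact jac_quad_nonneg α β _ _ hα hαβ

lemma Jq_bound (m n : ℤ) : m ^ 2 + n ^ 2 ≤ 4 * Jq α β m n := by
  rw [Jq_eq]
  exact jac_quad_bound α β _ _ _ hα hαβ (by nlinarith [sq_nonneg m])

lemma Jr_bound (m n : ℤ) : m ^ 2 + n ^ 2 ≤ 4 * Jr α β m n := by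
  rw [Jr_eq]
  refine jac_quad_bound α β _ _ _ hα hαβ ?_
  rcases le_or_gt 0 m with h | h <;> nlinarith

end JacLemmas

section JacSign

variable (α β : ℤ) (p a s : ℂ)

lemma Jf0_neg (v : ℤ × ℤ) : Jf0 α β p a (-s) v = (-1) ^ v.2 * Jf0 α β p a s v := by
  unfold Jf0
  rw [show -s = -1 * s from by ring, mul_zpow]
  ring

lemma Jf1_neg (v : ℤ × ℤ) : Jf1 α β p a (-s) v = (-1) ^ v.2 * Jf1 α β p a s v := by
  unfold Jf1
  rw [show -s = -1 * s from by ring, mul_zpow]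
  ring

end JacSign

section JacSummable

variable {α β : ℤ} (hα : 0 < α) (hαβ : α < 4 * β) {p a s : ℂ}
  (hp : ‖p‖ < 1) (ha : a ≠ 0) (hs : s ≠ 0)

include hα hαβ hp ha hs

lemma Jf0_norm_summable : Summable fun v : ℤ × ℤ => ‖Jf0 α β p a s v‖ := by
  have h := summable_norm_term p a s hp ha hs 0 (fun v => Jq α β v.1 v.2)
    (fun v => Jq_nonneg hα hαβ v.1 v.2) (fun v => Jq_bound hα hαβ v.1 v.2)
  simpa [Jf0] using h

lemma Jf1_norm_summable : Summable fun v : ℤ × ℤ => ‖Jf1 α β p a s v‖ := by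
  have h := summable_norm_term p a s hp ha hs 1 (fun v => Jr α β v.1 v.2)
    (fun v => Jr_nonneg hα hαβ v.1 v.2) (fun v => Jr_bound hα hαβ v.1 v.2)
  simpa [Jf1] using h

end JacSummable

section JacKey

lemma jac_key {α β : ℤ} (hα : 0 < α) (hαβ : α < 4 * β) {p a y : ℂ} (ha : a ≠ 0)
    (z : (ℤ × ℤ) × (ℤ × ℤ)) :
    Jf0 α β p a y z.1 * Jf0 α β p a y z.2 - Jf0 α β p a (-y) z.1 * Jf0 α β p a (-y) z.2
      = Jf1 α β p a y (jacEquiv z).1 * Jf1 α β p a y (jacEquiv z).2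
        - Jf1 α β p a (-y) (jacEquiv z).1 * Jf1 α β p a (-y) (jacEquiv z).2 := by
  obtain ⟨⟨m1, n1⟩, ⟨m2, n2⟩⟩ := z
  by_cases h : (n1 + n2) % 2 = 0
  · have he : jacEquiv ((m1, n1), (m2, n2)) = ((m1, n1), (m2, n2)) := by
      simp [jacEquiv, h]
    rw [he]
    simp only [Jf0_neg, Jf1_neg]
    have h1 : ((-1 : ℂ)) ^ n1 * (-1) ^ n2 = 1 := by
      rw [← zpow_add₀ (by norm_num : (-1:ℂ) ≠ 0)]
      exact Even.neg_one_zpow (Int.even_iff.2 (by omega))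
    linear_combination (Jf1 α β p a y (m1, n1) * Jf1 α β p a y (m2, n2)
      - Jf0 α β p a y (m1, n1) * Jf0 α β p a y (m2, n2)) * h1
  · obtain ⟨k, hn1⟩ : ∃ k, n1 = 2 * k + 1 + n2 := ⟨(n1 - n2 - 1) / 2, by omega⟩
    subst hn1
    have he : jacEquiv ((m1, 2 * k + 1 + n2), (m2, n2))
        = ((m1 + k, n2), (m2 - k - 1, 2 * k + 1 + n2)) := by
      simp only [jacEquiv, Equiv.coe_fn_mk]
      rw [if_neg (by simpa using h)]
      refine Prod.ext (Prod.ext ?_ ?_) (Prod.ext ?_ ?_) <;> simp <;> omega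
    rw [he]
    simp only [Jf0_neg, Jf1_neg]
    have hmain : Jf1 α β p a y (m1 + k, n2) * Jf1 α β p a y (m2 - k - 1, 2 * k + 1 + n2)
        = Jf0 α β p a y (m1, 2 * k + 1 + n2) * Jf0 α β p a y (m2, n2) := by
      have hp' : p ^ Jr α β (m1 + k) n2 * p ^ Jr α β (m2 - k - 1) (2 * k + 1 + n2)
          = p ^ Jq α β m1 (2 * k + 1 + n2) * p ^ Jq α β m2 n2 :=
        jac_zpow_mul_zpow p (Jr_nonneg hα hαβ _ _) (Jr_nonneg hα hαβ _ _)
          (Jq_nonneg hα hαβ _ _) (Jq_nonneg hα hαβ _ _) (by unfold Jq Jr; ring)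
      have ha' : a ^ (2 * (m1 + k) + 1) * a ^ (2 * (m2 - k - 1) + 1)
          = a ^ (2 * m1) * a ^ (2 * m2) := by
        rw [← zpow_add₀ ha, ← zpow_add₀ ha]
        congr 1
        ring
      unfold Jf1 Jf0
      dsimp only
      calc p ^ Jr α β (m1 + k) n2 * a ^ (2 * (m1 + k) + 1) * y ^ n2 *
            (p ^ Jr α β (m2 - k - 1) (2 * k + 1 + n2) * a ^ (2 * (m2 - k - 1) + 1) *
              y ^ (2 * k + 1 + n2))
          = (p ^ Jr α β (m1 + k) n2 * p ^ Jr α β (m2 - k - 1) (2 * k + 1 + n2)) *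
            ((a ^ (2 * (m1 + k) + 1) * a ^ (2 * (m2 - k - 1) + 1)) *
              (y ^ (2 * k + 1 + n2) * y ^ n2)) := by ring
        _ = (p ^ Jq α β m1 (2 * k + 1 + n2) * p ^ Jq α β m2 n2) *
            ((a ^ (2 * m1) * a ^ (2 * m2)) * (y ^ (2 * k + 1 + n2) * y ^ n2)) := by
            rw [hp', ha']
        _ = p ^ Jq α β m1 (2 * k + 1 + n2) * a ^ (2 * m1) * y ^ (2 * k + 1 + n2) *
            (p ^ Jq α β m2 n2 * a ^ (2 * m2) * y ^ n2) := by ring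
    linear_combination (((-1 : ℂ)) ^ (2 * k + 1 + n2) * (-1) ^ n2 - 1) * hmain
end JacKey
/-- Two-variable generalization of the Chan–Chan–Solé identity for the form
`α m² + α mn + β n²` (with `q = p⁴`, `x = a²` clearing fractional exponents). -/
theorem gen_jacobi_two_variable_aab (α β : ℤ) (hα : 0 < α) (hαβ : α < 4 * β)
    (p a y : ℂ) (hp : ‖p‖ < 1) (ha : a ≠ 0) (hy : y ≠ 0) :
    (∑' m : ℤ, ∑' n : ℤ, (-1 : ℂ) ^ n *
        p ^ (4 * (α * m ^ 2 + α * m * n + β * n ^ 2) + 4 * α * m + 2 * α * n + α) *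
        a ^ (2 * m + 1) * y ^ n) ^ 2
      + (∑' m : ℤ, ∑' n : ℤ,
          p ^ (4 * (α * m ^ 2 + α * m * n + β * n ^ 2)) * a ^ (2 * m) * y ^ n) ^ 2
      = (∑' m : ℤ, ∑' n : ℤ, (-1 : ℂ) ^ n *
          p ^ (4 * (α * m ^ 2 + α * m * n + β * n ^ 2)) * a ^ (2 * m) * y ^ n) ^ 2
        + (∑' m : ℤ, ∑' n : ℤ,
            p ^ (4 * (α * m ^ 2 + α * m * n + β * n ^ 2) + 4 * α * m + 2 * α * n + α) *
            a ^ (2 * m + 1) * y ^ n) ^ 2 := by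
  have hy' : (-y) ≠ 0 := neg_ne_zero.2 hy
  have hN0y := Jf0_norm_summable hα hαβ hp ha hy
  have hN0n := Jf0_norm_summable hα hαβ hp ha hy'
  have hN1y := Jf1_norm_summable hα hαβ hp ha hy
  have hN1n := Jf1_norm_summable hα hαβ hp ha hy'
  have hS0y : Summable (Jf0 α β p a y) := hN0y.of_norm
  have hS0n : Summable (Jf0 α β p a (-y)) := hN0n.of_norm
  have hS1y : Summable (Jf1 α β p a y) := hN1y.of_norm
  have hS1n : Summable (Jf1 α β p a (-y)) := hN1n.of_norm
  have eB : (∑' m : ℤ, ∑' n : ℤ,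
        p ^ (4 * (α * m ^ 2 + α * m * n + β * n ^ 2)) * a ^ (2 * m) * y ^ n)
      = ∑' v : ℤ × ℤ, Jf0 α β p a y v := (Summable.tsum_prod' hS0y hS0y.prod_factor).symm
  have eD : (∑' m : ℤ, ∑' n : ℤ,
        p ^ (4 * (α * m ^ 2 + α * m * n + β * n ^ 2) + 4 * α * m + 2 * α * n + α) *
          a ^ (2 * m + 1) * y ^ n)
      = ∑' v : ℤ × ℤ, Jf1 α β p a y v := (Summable.tsum_prod' hS1y hS1y.prod_factor).symm
  have eC : (∑' m : ℤ, ∑' n : ℤ, (-1 : ℂ) ^ n *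
        p ^ (4 * (α * m ^ 2 + α * m * n + β * n ^ 2)) * a ^ (2 * m) * y ^ n)
      = ∑' v : ℤ × ℤ, Jf0 α β p a (-y) v := by
    calc (∑' m : ℤ, ∑' n : ℤ, (-1 : ℂ) ^ n *
          p ^ (4 * (α * m ^ 2 + α * m * n + β * n ^ 2)) * a ^ (2 * m) * y ^ n)
        = ∑' m : ℤ, ∑' n : ℤ, Jf0 α β p a (-y) (m, n) := by
          refine tsum_congr fun m => tsum_congr fun n => ?_
          rw [Jf0_neg]
          unfold Jf0 Jq
          dsimp only
          ring
      _ = ∑' v : ℤ × ℤ, Jf0 α β p a (-y) v := (Summable.tsum_prod' hS0n hS0n.prod_factor).symm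
  have eA : (∑' m : ℤ, ∑' n : ℤ, (-1 : ℂ) ^ n *
        p ^ (4 * (α * m ^ 2 + α * m * n + β * n ^ 2) + 4 * α * m + 2 * α * n + α) *
          a ^ (2 * m + 1) * y ^ n)
      = ∑' v : ℤ × ℤ, Jf1 α β p a (-y) v := by
    calc (∑' m : ℤ, ∑' n : ℤ, (-1 : ℂ) ^ n *
          p ^ (4 * (α * m ^ 2 + α * m * n + β * n ^ 2) + 4 * α * m + 2 * α * n + α) *
            a ^ (2 * m + 1) * y ^ n)
        = ∑' m : ℤ, ∑' n : ℤ, Jf1 α β p a (-y) (m, n) := by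
          refine tsum_congr fun m => tsum_congr fun n => ?_
          rw [Jf1_neg]
          unfold Jf1 Jr
          dsimp only
          ring
      _ = ∑' v : ℤ × ℤ, Jf1 α β p a (-y) v := (Summable.tsum_prod' hS1n hS1n.prod_factor).symm
  rw [eA, eB, eC, eD, sq, sq, sq, sq,
    tsum_mul_tsum_of_summable_norm hN1n hN1n,
    tsum_mul_tsum_of_summable_norm hN0y hN0y,
    tsum_mul_tsum_of_summable_norm hN0n hN0n,
    tsum_mul_tsum_of_summable_norm hN1y hN1y]
  have hPb : Summable fun z : (ℤ × ℤ) × (ℤ × ℤ) =>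
      Jf0 α β p a y z.1 * Jf0 α β p a y z.2 := summable_mul_of_summable_norm hN0y hN0y
  have hPc : Summable fun z : (ℤ × ℤ) × (ℤ × ℤ) =>
      Jf0 α β p a (-y) z.1 * Jf0 α β p a (-y) z.2 := summable_mul_of_summable_norm hN0n hN0n
  have hPd : Summable fun z : (ℤ × ℤ) × (ℤ × ℤ) =>
      Jf1 α β p a y z.1 * Jf1 α β p a y z.2 := summable_mul_of_summable_norm hN1y hN1y
  have hPa : Summable fun z : (ℤ × ℤ) × (ℤ × ℤ) =>
      Jf1 α β p a (-y) z.1 * Jf1 α β p a (-y) z.2 := summable_mul_of_summable_norm hN1n hN1n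
  have h1 : (∑' z : (ℤ × ℤ) × (ℤ × ℤ),
        (Jf0 α β p a y z.1 * Jf0 α β p a y z.2 - Jf0 α β p a (-y) z.1 * Jf0 α β p a (-y) z.2))
      = (∑' z : (ℤ × ℤ) × (ℤ × ℤ), Jf0 α β p a y z.1 * Jf0 α β p a y z.2)
        - ∑' z : (ℤ × ℤ) × (ℤ × ℤ), Jf0 α β p a (-y) z.1 * Jf0 α β p a (-y) z.2 :=
    Summable.tsum_sub hPb hPc
  have h2 : (∑' z : (ℤ × ℤ) × (ℤ × ℤ),
        (Jf1 α β p a y z.1 * Jf1 α β p a y z.2 - Jf1 α β p a (-y) z.1 * Jf1 α β p a (-y) z.2))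
      = (∑' z : (ℤ × ℤ) × (ℤ × ℤ), Jf1 α β p a y z.1 * Jf1 α β p a y z.2)
        - ∑' z : (ℤ × ℤ) × (ℤ × ℤ), Jf1 α β p a (-y) z.1 * Jf1 α β p a (-y) z.2 :=
    Summable.tsum_sub hPd hPa
  have h3 : (∑' z : (ℤ × ℤ) × (ℤ × ℤ),
        (Jf0 α β p a y z.1 * Jf0 α β p a y z.2 - Jf0 α β p a (-y) z.1 * Jf0 α β p a (-y) z.2))
      = ∑' z : (ℤ × ℤ) × (ℤ × ℤ),
        (Jf1 α β p a y z.1 * Jf1 α β p a y z.2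
          - Jf1 α β p a (-y) z.1 * Jf1 α β p a (-y) z.2) := by
    rw [← jacEquiv.tsum_eq (fun z : (ℤ × ℤ) × (ℤ × ℤ) =>
      Jf1 α β p a y z.1 * Jf1 α β p a y z.2 - Jf1 α β p a (-y) z.1 * Jf1 α β p a (-y) z.2)]
    exact tsum_congr fun z => jac_key hα hαβ ha z
  linear_combination -h1 + h2 + h3
end
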